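/- A metric space (X, D) admits a topological well-ordering if and only if no subspace of (X, D) is perfect (i.e., every nonempty subset Y ⊆ X has at least one point that is isolated in the subspace topology of Y). -/

import Mathlib

open Metric Set

universe u

/-- Transfinite Cantor–Bendixson-style iteration: `cbT α` is the set of points that
belong to every earlier stage and are non-isolated in every earlier stage. -/
noncomputable def cbT {X : Type u} [MetricSpace X] : Ordinal.{u} → Set X :=
  Ordinal.lt_wf.fix fun α IH =>
    {x | ∀ β (h : β < α), x ∈ IH β h ∧
      ∀ ε : ℝ, 0 < ε → ∃ z ∈ IH β h, dist x z < ε ∧ z ≠ x}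

theorem mem_cbT_iff {X : Type u} [MetricSpace X] {α : Ordinal.{u}} {x : X} :
    x ∈ cbT α ↔ ∀ β < α, x ∈ cbT β ∧
      ∀ ε : ℝ, 0 < ε → ∃ z ∈ cbT β, dist x z < ε ∧ z ≠ x := by
  unfold cbT
  rw [WellFounded.fix_eq]
  rfl

theorem cbT_antitone {X : Type u} [MetricSpace X] {α β : Ordinal.{u}} (h : β ≤ α) :
    cbT (X := X) α ⊆ cbT β := by
  rcases eq_or_lt_of_le h with rfl | h
  · exact subset_rfl
  · intro x hx
    exact ((mem_cbT_iff.1 hx) β h).1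

/-- The Cantor–Bendixson rank of a point. -/
noncomputable def cbRank {X : Type u} [MetricSpace X] (x : X) : Ordinal.{u} :=
  sInf {α | x ∉ cbT α}

theorem mem_cbT_of_lt_cbRank {X : Type u} [MetricSpace X] {x : X} {β : Ordinal.{u}}
    (h : β < cbRank x) : x ∈ cbT β := by
  by_contra hx
  exact absurd (csInf_le' (s := {α | x ∉ cbT α}) hx) (not_le.2 h)

/-- A metric space admits a topological well-ordering if and only if no subspace is
perfect, i.e., every nonempty subset has a point that is isolated in its subspace
topology. -/
theorem topological_well_ordering_iff_no_perfect_subspace {X : Type*} [MetricSpace X] :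
    (∃ lt : X → X → Prop, IsWellOrder X lt ∧ ∀ x : X, IsOpen {y : X | lt y x}) ↔
    (∀ Y : Set X, Y.Nonempty →
      ∃ y ∈ Y, ∃ ε : ℝ, 0 < ε ∧ ∀ z ∈ Y, dist y z < ε → z = y) := by
  constructor
  · rintro ⟨lt, wo, hopen⟩ Y hY
    obtain ⟨y, hyY, hmin⟩ := wo.wf.has_min Y hY
    -- U = points not strictly above y
    set U : Set X := {z | ¬ lt y z} with hU
    have hyU : y ∈ U := by simpa [hU] using wo.wf.isIrrefl.irrefl y
    have hUopen : IsOpen U := by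
      by_cases hw : ∃ w, lt y w
      · obtain ⟨w₀, hw₀, hw₀min⟩ := wo.wf.has_min {w | lt y w} hw
        have : U = {z | lt z w₀} := by
          ext z
          constructor
          · intro hz
            rcases @trichotomous_of X lt _ z y with h | rfl | h
            · exact _root_.trans_of lt h hw₀
            · exact hw₀
            · exact absurd h hz
          · intro hz hyz
            exact hw₀min z hyz hz
        rw [this]
        exact hopen w₀
      · have : U = Set.univ := by
          ext z; simpa [hU] using fun h => hw ⟨z, h⟩
        rw [this]; exact isOpen_univ
    obtain ⟨ε, hε, hball⟩ := Metric.isOpen_iff.1 hUopen y hyU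
    refine ⟨y, hyY, ε, hε, fun z hzY hdist => ?_⟩
    have hzU : z ∈ U := hball (by simpa [Metric.mem_ball, dist_comm] using hdist)
    rcases @trichotomous_of X lt _ z y with h | rfl | h
    · exact absurd h (hmin z hzY)
    · rfl
    · exact absurd h hzU
  · intro h
    classical
    -- every point eventually leaves the iteration
    have hex : ∀ x : X, ∃ α, x ∉ cbT α := by
      intro x
      by_contra hc
      push_neg at hc
      set K : Set X := {y | ∀ α, y ∈ cbT α} with hK
      obtain ⟨y, hyK, ε, hε, hiso⟩ := h K ⟨x, fun α => hc α⟩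
      -- bound the exit ordinals of all points
      set g : X → Ordinal := fun z =>
        if hz : ∃ α, z ∉ cbT α then hz.choose else 0 with hg
      set γ : Ordinal := iSup g with hγ
      have hKγ : ∀ z : X, z ∈ cbT γ → z ∈ K := by
        intro z hz
        by_contra hzK
        have hzex : ∃ α, z ∉ cbT α := by
          simpa [hK] using hzK
        have hle : g z ≤ γ := le_ciSup (Ordinal.bddAbove_range g) z
        have : z ∉ cbT (g z) := by
          have h2 := hzex.choose_spec
          simp only [hg]
          rw [dif_pos hzex]
          exact h2
        exact this (cbT_antitone hle hz)
      have hy' : y ∈ cbT (γ + 1) := hyK _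
      obtain ⟨z, hz, hzd, hzy⟩ :=
        ((mem_cbT_iff.1 hy') γ (Order.lt_succ γ)).2 ε hε
      exact hzy (hiso z (hKγ z hz) hzd)
    have hrank_not_mem : ∀ x : X, x ∉ cbT (cbRank x) := fun x =>
      csInf_mem (hex x)
    -- the topological well-order
    set lt : X → X → Prop := fun a b =>
      Prod.Lex (· < ·) WellOrderingRel (cbRank a, a) (cbRank b, b) with hlt
    have hwo : IsWellOrder X lt := by
      have f : lt ↪r Prod.Lex ((· < ·) : Ordinal → Ordinal → Prop)
          (WellOrderingRel (α := X)) :=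
        ⟨⟨fun a => (cbRank a, a), fun a b hab => congrArg Prod.snd hab⟩,
          Iff.rfl⟩
      exact f.isWellOrder
    refine ⟨lt, hwo, fun x => ?_⟩
    rw [Metric.isOpen_iff]
    intro y hy
    have hρ : cbRank y ≤ cbRank x := by
      rcases (Prod.lex_def).1 hy with h' | h'
      · exact le_of_lt h'
      · exact le_of_eq h'.1
    -- y is isolated in some earlier stage
    have hy' := hrank_not_mem y
    rw [mem_cbT_iff] at hy'
    push_neg at hy'
    obtain ⟨β, hβ, hiso⟩ := hy'
    have hymem : y ∈ cbT β := mem_cbT_of_lt_cbRank hβ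
    obtain ⟨ε, hε, hsep⟩ := hiso hymem
    refine ⟨ε, hε, fun z hz => ?_⟩
    rcases eq_or_ne z y with rfl | hzy
    · exact hy
    · have hzd : dist y z < ε := by
        simpa [dist_comm] using Metric.mem_ball.1 hz
      have hznot : z ∉ cbT β := by
        intro hzmem
        exact hzy (hsep z hzmem hzd)
      have hzrank : cbRank z ≤ β := csInf_le' hznot
      have : cbRank z < cbRank x := lt_of_le_of_lt hzrank (lt_of_lt_of_le hβ hρ)
      exact Prod.lex_def.2 (Or.inl this)
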